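/- Let σ = (2k, 2k−1, ..., 3, 2) ∈ S_{2k} be the (2k−1)-cycle fixing 1 and mapping j ↦ j−1 for 3 ≤ j ≤ 2k and 2 ↦ 2k. Let τ = τ_1 = (1 2)(3 4)···(2k−1, 2k) ∈ K, let g ∈ S_k fix 1 and map s ↦ k+2−s for 2 ≤ s ≤ k, and let g_1 ∈ S_k map s ↦ k+1−s. Then σ·τ·ḡ·σ^{-1} = τ_1·ḡ_1 and sgn(τ_1)·sgn(g)·sgn(g_1) = −1. -/

import Mathlib

/-- The equivalence `Fin k × Fin 2 ≃ Fin (2*k)` sending (zero-based) `(s, r)` to `2*s + r`. -/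
def pairEquiv (k : ℕ) : Fin k × Fin 2 ≃ Fin (2 * k) :=
  finProdFinEquiv.trans (finCongr (Nat.mul_comm k 2))

/-- For `g ∈ S_k`, the permutation `ḡ ∈ S_{2k}` with `ḡ(2s−1) = 2g(s)−1` and `ḡ(2s) = 2g(s)`. -/
def barPerm {k : ℕ} (g : Equiv.Perm (Fin k)) : Equiv.Perm (Fin (2 * k)) :=
  (pairEquiv k).permCongr (Equiv.prodCongr g (Equiv.refl (Fin 2)))

/-- The element `τ = (1 2)(3 4)⋯(2k−1, 2k)` of `K ≤ S_{2k}`. -/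
def tauK (k : ℕ) : Equiv.Perm (Fin (2 * k)) :=
  (pairEquiv k).permCongr (Equiv.prodCongr (Equiv.refl (Fin k)) (Equiv.swap (0 : Fin 2) 1))


lemma pairEquiv_val {k : ℕ} (s : Fin k) (r : Fin 2) :
    ((pairEquiv k) (s, r)).val = 2 * s.val + r.val := by
  simp [pairEquiv]; omega

lemma pairEquiv_symm_fst {k : ℕ} (j : Fin (2 * k)) :
    ((pairEquiv k).symm j).1.val = j.val / 2 := by
  simp [pairEquiv, Fin.divNat]

lemma pairEquiv_symm_snd {k : ℕ} (j : Fin (2 * k)) :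
    ((pairEquiv k).symm j).2.val = j.val % 2 := by
  simp [pairEquiv, Fin.modNat]

lemma barPerm_val {k : ℕ} (g : Equiv.Perm (Fin k)) (j : Fin (2 * k)) (s : Fin k)
    (hs : s.val = j.val / 2) :
    (barPerm g j).val = 2 * (g s).val + j.val % 2 := by
  have h1 : ((pairEquiv k).symm j).1 = s := Fin.ext (by rw [pairEquiv_symm_fst, hs])
  have : barPerm g j = (pairEquiv k) (g s, ((pairEquiv k).symm j).2) := by
    simp [barPerm, Equiv.permCongr, Equiv.prodCongr, Prod.map, h1]
  rw [this, pairEquiv_val, pairEquiv_symm_snd]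

lemma swap01_val (r : Fin 2) : ((Equiv.swap (0 : Fin 2) 1) r).val = 1 - r.val := by
  revert r; decide

lemma tauK_val {k : ℕ} (j : Fin (2 * k)) :
    (tauK k j).val = 2 * (j.val / 2) + (1 - j.val % 2) := by
  have : tauK k j = (pairEquiv k) (((pairEquiv k).symm j).1,
      (Equiv.swap (0 : Fin 2) 1) ((pairEquiv k).symm j).2) := by
    simp [tauK, Equiv.permCongr, Equiv.prodCongr, Prod.map]
  rw [this, pairEquiv_val, pairEquiv_symm_fst, swap01_val, pairEquiv_symm_snd]

lemma sign_tauK (k : ℕ) : Equiv.Perm.sign (tauK k) = (-1) ^ k := by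
  rw [tauK, Equiv.Perm.sign_permCongr, Equiv.prodCongr_refl_left,
    Equiv.Perm.sign_prodCongrRight]
  simp [Equiv.Perm.sign_swap (by decide : (0 : Fin 2) ≠ 1)]

/-- Statement 15, in zero-based indexing: `σ ∈ S_{2k}` is the cycle fixing `0`, sending
`1 ↦ 2k−1` and `j ↦ j−1` for `2 ≤ j ≤ 2k−1` (one-based: `(2k, 2k−1, …, 3, 2)`);
`τ = τ₁ = (1 2)(3 4)⋯(2k−1, 2k)`; `g` fixes `0` and sends `s ↦ k−s` for `1 ≤ s ≤ k−1`
(one-based: fixes `1`, `s ↦ k+2−s`); `g₁` sends `s ↦ k−1−s` (one-based: `s ↦ k+1−s`).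
Then `σ τ ḡ σ⁻¹ = τ₁ ḡ₁` and `sgn(τ₁) sgn(g) sgn(g₁) = −1`. -/
theorem key_lemma_cycle_case (k : ℕ) (hk : 0 < k)
    (σ : Equiv.Perm (Fin (2 * k))) (g g₁ : Equiv.Perm (Fin k))
    (hσ : ∀ j : Fin (2 * k),
      (j.val = 0 → (σ j).val = 0) ∧ (j.val = 1 → (σ j).val = 2 * k - 1) ∧
        (2 ≤ j.val → (σ j).val = j.val - 1))
    (hg : ∀ s : Fin k, (s.val = 0 → (g s).val = 0) ∧ (1 ≤ s.val → (g s).val = k - s.val))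
    (hg₁ : ∀ s : Fin k, (g₁ s).val = k - 1 - s.val) :
    σ * tauK k * barPerm g * σ⁻¹ = tauK k * barPerm g₁ ∧
      (Equiv.Perm.sign (tauK k) : ℤ) * (Equiv.Perm.sign g : ℤ) * (Equiv.Perm.sign g₁ : ℤ) = -1 := by
  constructor
  · rw [mul_inv_eq_iff_eq_mul]
    refine Equiv.ext fun x => Fin.ext ?_
    simp only [Equiv.Perm.mul_apply]
    have hx2 : x.val < 2 * k := x.isLt
    set s : Fin k := ⟨x.val / 2, by omega⟩ with hs
    have hxdm : 2 * (x.val / 2) + x.val % 2 = x.val := by omega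
    have hxm : x.val % 2 < 2 := Nat.mod_lt _ (by norm_num)
    have hb : (barPerm g x).val = 2 * (g s).val + x.val % 2 := barPerm_val g x s rfl
    have hgs : (g s).val < k := (g s).isLt
    have ht : (tauK k (barPerm g x)).val = 2 * (g s).val + (1 - x.val % 2) := by
      rw [tauK_val, hb]; omega
    obtain ⟨hσ0, hσ1, hσ2⟩ := hσ (tauK k (barPerm g x))
    obtain ⟨hτ0, hτ1, hτ2⟩ := hσ x
    set z := σ x with hz
    have hz2 : z.val < 2 * k := z.isLt
    set t : Fin k := ⟨z.val / 2, by omega⟩ with htt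
    have hzdm : 2 * (z.val / 2) + z.val % 2 = z.val := by omega
    have hzm : z.val % 2 < 2 := Nat.mod_lt _ (by norm_num)
    have hb1 : (barPerm g₁ z).val = 2 * (g₁ t).val + z.val % 2 := barPerm_val g₁ z t rfl
    have hg1t : (g₁ t).val = k - 1 - t.val := hg₁ t
    have htz : (tauK k (barPerm g₁ z)).val = 2 * (g₁ t).val + (1 - z.val % 2) := by
      rw [tauK_val, hb1]; omega
    have htval : t.val = z.val / 2 := rfl
    have hsval : s.val = x.val / 2 := rfl
    have htlt : t.val < k := t.isLt
    obtain ⟨hgA, hgB⟩ := hg s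
    rw [htz]
    rcases Nat.lt_or_ge x.val 2 with hx | hx
    · rcases Nat.lt_or_ge x.val 1 with hx0 | hx1
      · -- x.val = 0
        have hxv : x.val = 0 := by omega
        have hs0 : s.val = 0 := by omega
        have hgs0 : (g s).val = 0 := hgA hs0
        have h1 : (tauK k (barPerm g x)).val = 1 := by rw [ht, hgs0]; omega
        rw [hσ1 h1]
        have hz0 : z.val = 0 := hτ0 hxv
        have ht0 : t.val = 0 := by omega
        omega
      · -- x.val = 1
        have hxv : x.val = 1 := by omega
        have hs0 : s.val = 0 := by omega
        have hgs0 : (g s).val = 0 := hgA hs0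
        have h1 : (tauK k (barPerm g x)).val = 0 := by rw [ht, hgs0]; omega
        rw [hσ0 h1]
        have hz0 : z.val = 2 * k - 1 := hτ1 hxv
        have ht0 : t.val = k - 1 := by omega
        omega
    · have hs1 : 1 ≤ s.val := by omega
      have hgsv : (g s).val = k - s.val := hgB hs1
      have hslt : s.val < k := s.isLt
      have hgs1 : 1 ≤ (g s).val := by omega
      have h2 : 2 ≤ (tauK k (barPerm g x)).val := by omega
      rw [hσ2 h2, ht]
      have hzv : z.val = x.val - 1 := hτ2 hx
      omega
  · -- sign computation
    obtain ⟨m, rfl⟩ : ∃ m, k = m + 1 := ⟨k - 1, by omega⟩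
    have hgg : g * g₁ = finRotate (m + 1) := by
      refine Equiv.ext fun u => Fin.ext ?_
      have h1 : (g₁ u).val = m + 1 - 1 - u.val := hg₁ u
      obtain ⟨hA, hB⟩ := hg (g₁ u)
      rw [Equiv.Perm.mul_apply, coe_finRotate]
      have hu : u.val < m + 1 := u.isLt
      have hglt : (g (g₁ u)).val < m + 1 := (g (g₁ u)).isLt
      split_ifs with hlast
      · have hum : u.val = m := by rw [hlast]; rfl
        exact hA (by omega)
      · have hum : u.val ≠ m := fun h => hlast (Fin.ext (by simp [h]))
        have := hB (by omega)
        omega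
    have h2 : Equiv.Perm.sign g * Equiv.Perm.sign g₁ = (-1 : ℤˣ) ^ m := by
      rw [← map_mul, hgg, sign_finRotate, Nat.add_sub_cancel]
    have h1 : Equiv.Perm.sign (tauK (m + 1)) = (-1 : ℤˣ) ^ (m + 1) := sign_tauK (m + 1)
    have h3 : Equiv.Perm.sign (tauK (m + 1)) * (Equiv.Perm.sign g * Equiv.Perm.sign g₁) =
        (-1 : ℤˣ) := by
      rw [h1, h2, ← pow_add]
      exact Odd.neg_one_pow ⟨m, by ring⟩
    have h4 := congrArg (fun u : ℤˣ => (u : ℤ)) h3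
    simpa [mul_assoc] using h4
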